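/- Let G be an irreducible graph-directed matrix product system with irreducibility family H. Then there exist constants A, B > 0 such that for any finite paths η₁, η₂ ∈ Σ*, there exists some γ ∈ H such that η₁γη₂ is a path and A·‖T(η₁)‖·‖T(η₂)‖ ≤ ‖T(η₁γη₂)‖ ≤ B·‖T(η₁)‖·‖T(η₂)‖. -/

import Mathlib

open Filter Topology

/-- A graph-directed matrix product system: a finite directed graph (multiple
edges allowed) with a dimension for each vertex, a non-negative transition
matrix for each edge (encoded as a block of a big matrix indexed by
`(v : V) × Fin (dim v)`, supported on the `(src e, tgt e)` block), and a
weight `W e ∈ (0,1)` for each edge. -/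
structure GMPS where
  V : Type
  E : Type
  [fintV : Fintype V]
  [decV : DecidableEq V]
  [fintE : Fintype E]
  [decE : DecidableEq E]
  src : E → V
  tgt : E → V
  dim : V → ℕ
  dim_pos : ∀ v, 0 < dim v
  T : E → Matrix ((v : V) × Fin (dim v)) ((v : V) × Fin (dim v)) ℝ
  T_nonneg : ∀ e i j, 0 ≤ T e i j
  T_block : ∀ e i j, T e i j ≠ 0 → i.1 = src e ∧ j.1 = tgt e
  W : E → ℝ
  W_pos : ∀ e, 0 < W e
  W_lt_one : ∀ e, W e < 1

attribute [instance] GMPS.fintV GMPS.decV GMPS.fintE GMPS.decE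

namespace GMPS

variable (G : GMPS)

/-- The global index type for the block matrices. -/
abbrev Idx := (v : G.V) × Fin (G.dim v)

/-- A finite sequence of edges is a path when consecutive edges are compatible. -/
def IsPath (l : List G.E) : Prop := l.Chain' fun e e' => G.tgt e = G.src e'

/-- A (nonempty) path starts at the source of its first edge. -/
def startsAt (l : List G.E) (v : G.V) : Prop := ∃ e, l.head? = some e ∧ G.src e = v

/-- A (nonempty) path ends at the target of its last edge. -/
def endsAt (l : List G.E) (v : G.V) : Prop := ∃ e, l.getLast? = some e ∧ G.tgt e = v

/-- `l` is a (nonempty) path from `v₁` to `v₂`. -/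
def PathFrom (l : List G.E) (v₁ v₂ : G.V) : Prop :=
  G.IsPath l ∧ G.startsAt l v₁ ∧ G.endsAt l v₂

/-- The underlying graph is strongly connected. -/
def StronglyConnected : Prop := ∀ v₁ v₂ : G.V, ∃ l, G.PathFrom l v₁ v₂

/-- The product `T(e₁) ⋯ T(eₙ)` of the transition matrices along a path. -/
noncomputable def Tp (l : List G.E) : Matrix G.Idx G.Idx ℝ := (l.map G.T).prod

/-- The product `W(e₁) ⋯ W(eₙ)` of the weights along a path. -/
def Wp (l : List G.E) : ℝ := (l.map G.W).prod

/-- The norm of a matrix: the sum of its entries. -/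
noncomputable def mnorm (M : Matrix G.Idx G.Idx ℝ) : ℝ := ∑ i, ∑ j, M i j

/-- `Σ_t`: the paths `η` with `W(η) < t ≤ W(η⁻)` and `‖T(η)‖ > 0`. -/
def SigmaT (t : ℝ) : Set (List G.E) :=
  {l | G.IsPath l ∧ l ≠ [] ∧ G.Wp l < t ∧ t ≤ G.Wp l.dropLast ∧ 0 < G.mnorm (G.Tp l)}

/-- `H` is an irreducibility family: for all vertices `v₁, v₂` and all indices
`i ≤ d(v₁)`, `j ≤ d(v₂)` there is `γ ∈ H` from `v₁` to `v₂` with `T(γ)_{i,j} > 0`. -/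
def IrredFamily (H : Finset (List G.E)) : Prop :=
  ∀ (v₁ v₂ : G.V) (i : Fin (G.dim v₁)) (j : Fin (G.dim v₂)),
    ∃ γ ∈ H, G.PathFrom γ v₁ v₂ ∧ 0 < G.Tp γ ⟨v₁, i⟩ ⟨v₂, j⟩

/-- The matrix product system is irreducible. -/
def Irreducible : Prop := ∃ H : Finset (List G.E), G.IrredFamily H

/-- An infinite path in the graph. -/
def IsInfPath (γ : ℕ → G.E) : Prop := ∀ n, G.tgt (γ n) = G.src (γ (n + 1))

/-- The prefix `γ|n` of an infinite path. -/
def pfx (γ : ℕ → G.E) (n : ℕ) : List G.E := (List.range n).map γ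

/-- The quotient `log ‖T(γ|n)‖ / log W(γ|n)` whose `liminf`/`limsup`/limit are
the lower/upper Lyapunov exponent and Lyapunov exponent of `γ`. -/
noncomputable def lyapQ (γ : ℕ → G.E) (n : ℕ) : ℝ :=
  Real.log (G.mnorm (G.Tp (G.pfx γ n))) / Real.log (G.Wp (G.pfx γ n))

/-- `min_{η ∈ Σ_t} log ‖T(η)‖ / log t`. -/
noncomputable def minQ (t : ℝ) : ℝ :=
  sInf ((fun l => Real.log (G.mnorm (G.Tp l)) / Real.log t) '' G.SigmaT t)

/-- `max_{η ∈ Σ_t} log ‖T(η)‖ / log t`. -/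
noncomputable def maxQ (t : ℝ) : ℝ :=
  sSup ((fun l => Real.log (G.mnorm (G.Tp l)) / Real.log t) '' G.SigmaT t)

/-- The spectral radius of a (non-negative) square matrix. -/
noncomputable def spr (M : Matrix G.Idx G.Idx ℝ) : ℝ := (spectralRadius ℝ M).toReal

end GMPS
namespace GMPS

variable (G : GMPS)

lemma Tp_nil' : G.Tp [] = 1 := rfl

lemma Tp_cons' (e : G.E) (l : List G.E) : G.Tp (e :: l) = G.T e * G.Tp l := by
  simp [Tp]

lemma Tp_append' (l₁ l₂ : List G.E) : G.Tp (l₁ ++ l₂) = G.Tp l₁ * G.Tp l₂ := by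
  simp [Tp]

lemma Tp_entry_nonneg (l : List G.E) : ∀ i j, 0 ≤ G.Tp l i j := by
  induction l with
  | nil =>
    intro i j
    rw [Tp_nil', Matrix.one_apply]
    split <;> norm_num
  | cons e l ih =>
    intro i j
    rw [Tp_cons', Matrix.mul_apply]
    exact Finset.sum_nonneg fun k _ => mul_nonneg (G.T_nonneg e i k) (ih k j)

lemma entry_le_mnorm (M : Matrix G.Idx G.Idx ℝ) (hM : ∀ i j, 0 ≤ M i j) (i j : G.Idx) :
    M i j ≤ G.mnorm M := by
  calc M i j ≤ ∑ j', M i j' :=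
        Finset.single_le_sum (fun j' _ => hM i j') (Finset.mem_univ j)
    _ ≤ ∑ i', ∑ j', M i' j' :=
        Finset.single_le_sum (fun i' _ => Finset.sum_nonneg fun j' _ => hM i' j')
          (Finset.mem_univ i)

lemma mnorm_Tp_nonneg (l : List G.E) : 0 ≤ G.mnorm (G.Tp l) :=
  Finset.sum_nonneg fun i _ => Finset.sum_nonneg fun j _ => G.Tp_entry_nonneg l i j

lemma mnorm_mul_le (M N : Matrix G.Idx G.Idx ℝ) (hM : ∀ i j, 0 ≤ M i j)
    (hN : ∀ i j, 0 ≤ N i j) : G.mnorm (M * N) ≤ G.mnorm M * G.mnorm N := by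
  have col_le : ∀ k, (∑ i, M i k) ≤ G.mnorm M := by
    intro k
    rw [mnorm]; refine le_of_le_of_eq ?_ Finset.sum_comm
    exact Finset.single_le_sum
      (fun j _ => Finset.sum_nonneg fun i _ => hM i j) (Finset.mem_univ k)
  calc G.mnorm (M * N) = ∑ i, ∑ k, ∑ j, M i k * N k j := by
        simp only [mnorm, Matrix.mul_apply]
        exact Finset.sum_congr rfl fun i _ => Finset.sum_comm
    _ = ∑ k, ∑ i, ∑ j, M i k * N k j := Finset.sum_comm
    _ = ∑ k, (∑ i, M i k) * (∑ j, N k j) := by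
        refine Finset.sum_congr rfl fun k _ => ?_
        rw [Finset.sum_mul]
        exact Finset.sum_congr rfl fun i _ => (Finset.mul_sum _ _ _).symm
    _ ≤ ∑ k, G.mnorm M * (∑ j, N k j) :=
        Finset.sum_le_sum fun k _ => mul_le_mul_of_nonneg_right (col_le k)
          (Finset.sum_nonneg fun j _ => hN k j)
    _ = G.mnorm M * G.mnorm N := by rw [← Finset.mul_sum]; rfl

lemma mnorm_Tp_append_le (l₁ l₂ : List G.E) :
    G.mnorm (G.Tp (l₁ ++ l₂)) ≤ G.mnorm (G.Tp l₁) * G.mnorm (G.Tp l₂) := by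
  rw [Tp_append']
  exact G.mnorm_mul_le _ _ (G.Tp_entry_nonneg l₁) (G.Tp_entry_nonneg l₂)

lemma Tp_col (l : List G.E) (e : G.E) (h : l.getLast? = some e) (i j : G.Idx)
    (hne : G.Tp l i j ≠ 0) : j.1 = G.tgt e := by
  obtain ⟨l', rfl⟩ := List.getLast?_eq_some_iff.mp h
  rw [Tp_append', Matrix.mul_apply] at hne
  obtain ⟨k, -, hk⟩ := Finset.exists_ne_zero_of_sum_ne_zero hne
  have hTe : G.Tp [e] k j ≠ 0 := right_ne_zero_of_mul hk
  rw [Tp_cons', Tp_nil', mul_one] at hTe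
  exact (G.T_block e k j hTe).2

lemma Tp_row (l : List G.E) (e : G.E) (h : l.head? = some e) (i j : G.Idx)
    (hne : G.Tp l i j ≠ 0) : i.1 = G.src e := by
  cases l with
  | nil => simp at h
  | cons a l' =>
    obtain rfl : a = e := by simpa using h
    rw [Tp_cons', Matrix.mul_apply] at hne
    obtain ⟨k, -, hk⟩ := Finset.exists_ne_zero_of_sum_ne_zero hne
    exact (G.T_block a i k (left_ne_zero_of_mul hk)).1

end GMPS

namespace GMPS

variable (G : GMPS)

lemma glue_path {η₁ γ η₂ : List G.E} (h1 : G.IsPath η₁) (h2 : G.IsPath η₂)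
    (hγ : G.IsPath γ) {e₁ e₂ es ee : G.E} (hl1 : η₁.getLast? = some e₁)
    (hh2 : η₂.head? = some e₂) (hhγ : γ.head? = some es) (hlγ : γ.getLast? = some ee)
    (h12 : G.tgt e₁ = G.src es) (h23 : G.tgt ee = G.src e₂) :
    G.IsPath (η₁ ++ γ ++ η₂) := by
  have hγne : γ ≠ [] := by
    intro h; rw [h] at hhγ; simp at hhγ
  rw [IsPath, List.Chain', List.isChain_append]
  refine ⟨?_, h2, ?_⟩
  · rw [List.isChain_append]
    refine ⟨h1, hγ, ?_⟩
    intro x hx y hy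
    rw [hl1, Option.mem_some_iff] at hx
    rw [hhγ, Option.mem_some_iff] at hy
    rw [← hx, ← hy]; exact h12
  · intro x hx y hy
    rw [List.getLast?_append, hlγ, Option.some_or, Option.mem_some_iff] at hx
    rw [hh2, Option.mem_some_iff] at hy
    rw [← hx, ← hy]; exact h23

lemma mul_entry_ge (M N : Matrix G.Idx G.Idx ℝ) (hM : ∀ i j, 0 ≤ M i j)
    (hN : ∀ i j, 0 ≤ N i j) (i k j : G.Idx) : M i k * N k j ≤ (M * N) i j := by
  rw [Matrix.mul_apply]
  exact Finset.single_le_sum (f := fun b => M i b * N b j)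
    (fun b _ => mul_nonneg (hM i b) (hN b j)) (Finset.mem_univ k)

lemma exists_max_entry (M : Matrix G.Idx G.Idx ℝ) [Nonempty G.Idx] :
    ∃ i j, G.mnorm M ≤ (Fintype.card G.Idx : ℝ) ^ 2 * M i j := by
  obtain ⟨⟨i, j⟩, -, hmax⟩ := Finset.exists_max_image
    (Finset.univ : Finset (G.Idx × G.Idx)) (fun p => M p.1 p.2) Finset.univ_nonempty
  refine ⟨i, j, ?_⟩
  calc G.mnorm M ≤ ∑ _i' : G.Idx, ∑ _j' : G.Idx, M i j :=
        Finset.sum_le_sum fun i' _ => Finset.sum_le_sum fun j' _ =>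
          hmax (i', j') (Finset.mem_univ _)
    _ = (Fintype.card G.Idx : ℝ) ^ 2 * M i j := by
        simp [Finset.sum_const, nsmul_eq_mul]; ring

end GMPS

/-- **Irreducibility estimate.** In an irreducible matrix product system with
irreducibility family `H`, there are constants `A, B > 0` such that any two paths
`η₁, η₂` can be connected by some `γ ∈ H` with
`A ‖T(η₁)‖ ‖T(η₂)‖ ≤ ‖T(η₁γη₂)‖ ≤ B ‖T(η₁)‖ ‖T(η₂)‖`. -/
theorem gmps_irred_connecting_estimate (G : GMPS) (hsc : G.StronglyConnected)
    (H : Finset (List G.E)) (hH : G.IrredFamily H) :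
    ∃ A B : ℝ, 0 < A ∧ 0 < B ∧
      ∀ η₁ η₂ : List G.E, G.IsPath η₁ → η₁ ≠ [] → G.IsPath η₂ → η₂ ≠ [] →
        ∃ γ ∈ H, G.IsPath (η₁ ++ γ ++ η₂) ∧
          A * G.mnorm (G.Tp η₁) * G.mnorm (G.Tp η₂) ≤ G.mnorm (G.Tp (η₁ ++ γ ++ η₂)) ∧
          G.mnorm (G.Tp (η₁ ++ γ ++ η₂)) ≤ B * G.mnorm (G.Tp η₁) * G.mnorm (G.Tp η₂) := by
  classical
  set n2 : ℝ := (Fintype.card G.Idx : ℝ) ^ 2 with hn2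
  have hn2nonneg : 0 ≤ n2 := by positivity
  set cS : Finset ℝ := ((H ×ˢ (Finset.univ : Finset (G.Idx × G.Idx))).image
      fun p => G.Tp p.1 p.2.1 p.2.2).filter (fun x => 0 < x) with hcS
  set c : ℝ := if h : cS.Nonempty then cS.min' h else 1 with hc
  have hcpos : 0 < c := by
    rw [hc]; split
    · next h => exact (Finset.mem_filter.mp (cS.min'_mem h)).2
    · norm_num
  have hcle : ∀ γ ∈ H, ∀ k l : G.Idx, 0 < G.Tp γ k l → c ≤ G.Tp γ k l := by
    intro γ hγ k l hpos
    have hmem : G.Tp γ k l ∈ cS := by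
      rw [hcS, Finset.mem_filter]
      exact ⟨Finset.mem_image.mpr ⟨(γ, k, l),
        Finset.mem_product.mpr ⟨hγ, Finset.mem_univ _⟩, rfl⟩, hpos⟩
    rw [hc, dif_pos ⟨_, hmem⟩]
    exact Finset.min'_le _ _ hmem
  set B : ℝ := 1 + ∑ γ ∈ H, G.mnorm (G.Tp γ) with hB
  have hBpos : 0 < B := by
    have : 0 ≤ ∑ γ ∈ H, G.mnorm (G.Tp γ) :=
      Finset.sum_nonneg fun γ _ => G.mnorm_Tp_nonneg γ
    rw [hB]; linarith
  have hBle : ∀ γ ∈ H, G.mnorm (G.Tp γ) ≤ B := by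
    intro γ hγ
    have := Finset.single_le_sum (f := fun γ => G.mnorm (G.Tp γ))
      (fun γ _ => G.mnorm_Tp_nonneg γ) hγ
    rw [hB]; linarith
  refine ⟨c / (n2 * n2 + 1), B, by positivity, hBpos, ?_⟩
  intro η₁ η₂ h1 hne1 h2 hne2
  obtain ⟨e₁, hl1⟩ : ∃ e, η₁.getLast? = some e :=
    ⟨η₁.getLast hne1, List.getLast?_eq_getLast hne1⟩
  obtain ⟨e₂, hh2⟩ : ∃ e, η₂.head? = some e := by
    cases η₂ with
    | nil => exact absurd rfl hne2
    | cons a l => exact ⟨a, rfl⟩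
  have : Nonempty G.Idx := ⟨⟨G.tgt e₁, ⟨0, G.dim_pos _⟩⟩⟩
  have upper : ∀ γ : List G.E,
      G.mnorm (G.Tp (η₁ ++ γ ++ η₂)) ≤
        (G.mnorm (G.Tp η₁) * G.mnorm (G.Tp γ)) * G.mnorm (G.Tp η₂) := by
    intro γ
    calc G.mnorm (G.Tp (η₁ ++ γ ++ η₂))
        ≤ G.mnorm (G.Tp (η₁ ++ γ)) * G.mnorm (G.Tp η₂) := G.mnorm_Tp_append_le _ _
      _ ≤ (G.mnorm (G.Tp η₁) * G.mnorm (G.Tp γ)) * G.mnorm (G.Tp η₂) :=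
          mul_le_mul_of_nonneg_right (G.mnorm_Tp_append_le _ _) (G.mnorm_Tp_nonneg _)
  by_cases hm : 0 < G.mnorm (G.Tp η₁) ∧ 0 < G.mnorm (G.Tp η₂)
  · obtain ⟨hm1, hm2⟩ := hm
    obtain ⟨i, k, hik⟩ := G.exists_max_entry (G.Tp η₁)
    obtain ⟨l, j, hlj⟩ := G.exists_max_entry (G.Tp η₂)
    obtain ⟨kv, ki⟩ := k
    obtain ⟨lv, li⟩ := l
    have hikpos : 0 < G.Tp η₁ i ⟨kv, ki⟩ := by
      have h0 := G.Tp_entry_nonneg η₁ i ⟨kv, ki⟩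
      nlinarith
    have hljpos : 0 < G.Tp η₂ ⟨lv, li⟩ j := by
      have h0 := G.Tp_entry_nonneg η₂ ⟨lv, li⟩ j
      nlinarith
    have hk1 : kv = G.tgt e₁ := G.Tp_col η₁ e₁ hl1 i ⟨kv, ki⟩ hikpos.ne'
    have hl2 : lv = G.src e₂ := G.Tp_row η₂ e₂ hh2 ⟨lv, li⟩ j hljpos.ne'
    subst hk1; subst hl2
    obtain ⟨γ, hγH, ⟨hγpath, ⟨es, hhγ, hes⟩, ⟨ee, hlγ, hee⟩⟩, hTγ⟩ :=
      hH (G.tgt e₁) (G.src e₂) ki li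
    refine ⟨γ, hγH, G.glue_path h1 h2 hγpath hl1 hh2 hhγ hlγ hes.symm hee, ?_, ?_⟩
    · -- lower bound
      have hPN : ∀ a b, 0 ≤ (G.Tp γ * G.Tp η₂) a b := by
        intro a b
        have := G.Tp_entry_nonneg (γ ++ η₂) a b
        rwa [GMPS.Tp_append'] at this
      have eT : G.Tp (η₁ ++ γ ++ η₂) = G.Tp η₁ * (G.Tp γ * G.Tp η₂) := by
        rw [GMPS.Tp_append', GMPS.Tp_append', mul_assoc]
      have s1 : G.Tp γ ⟨G.tgt e₁, ki⟩ ⟨G.src e₂, li⟩ * G.Tp η₂ ⟨G.src e₂, li⟩ j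
          ≤ (G.Tp γ * G.Tp η₂) ⟨G.tgt e₁, ki⟩ j :=
        G.mul_entry_ge _ _ (G.Tp_entry_nonneg γ) (G.Tp_entry_nonneg η₂) _ _ _
      have s2 : G.Tp η₁ i ⟨G.tgt e₁, ki⟩ * (G.Tp γ * G.Tp η₂) ⟨G.tgt e₁, ki⟩ j
          ≤ (G.Tp η₁ * (G.Tp γ * G.Tp η₂)) i j :=
        G.mul_entry_ge _ _ (G.Tp_entry_nonneg η₁) hPN _ _ _
      have s3 : (G.Tp η₁ * (G.Tp γ * G.Tp η₂)) i j ≤ G.mnorm (G.Tp (η₁ ++ γ ++ η₂)) := by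
        rw [← eT]
        exact G.entry_le_mnorm _ (G.Tp_entry_nonneg _) i j
      have key : G.Tp η₁ i ⟨G.tgt e₁, ki⟩ *
          (G.Tp γ ⟨G.tgt e₁, ki⟩ ⟨G.src e₂, li⟩ * G.Tp η₂ ⟨G.src e₂, li⟩ j)
          ≤ G.mnorm (G.Tp (η₁ ++ γ ++ η₂)) := by
        calc G.Tp η₁ i ⟨G.tgt e₁, ki⟩ *
            (G.Tp γ ⟨G.tgt e₁, ki⟩ ⟨G.src e₂, li⟩ * G.Tp η₂ ⟨G.src e₂, li⟩ j)
            ≤ G.Tp η₁ i ⟨G.tgt e₁, ki⟩ * (G.Tp γ * G.Tp η₂) ⟨G.tgt e₁, ki⟩ j :=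
              mul_le_mul_of_nonneg_left s1 hikpos.le
          _ ≤ (G.Tp η₁ * (G.Tp γ * G.Tp η₂)) i j := s2
          _ ≤ G.mnorm (G.Tp (η₁ ++ γ ++ η₂)) := s3
      have hcP := hcle γ hγH _ _ hTγ
      rw [div_mul_eq_mul_div, div_mul_eq_mul_div, div_le_iff₀ (by positivity)]
      refine le_trans ?_ (mul_le_mul_of_nonneg_right key (by positivity))
      have h12 : G.mnorm (G.Tp η₁) * G.mnorm (G.Tp η₂)
          ≤ (n2 * G.Tp η₁ i ⟨G.tgt e₁, ki⟩) * (n2 * G.Tp η₂ ⟨G.src e₂, li⟩ j) :=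
        mul_le_mul hik hlj hm2.le (by positivity)
      nlinarith [mul_le_mul_of_nonneg_left h12 hcpos.le,
        mul_le_mul_of_nonneg_right hcP
          (mul_nonneg (mul_nonneg hn2nonneg hikpos.le) (mul_nonneg hn2nonneg hljpos.le)),
        mul_pos hikpos hljpos, mul_nonneg hikpos.le hljpos.le, hTγ]
    · -- upper bound
      refine (upper γ).trans ?_
      have := mul_le_mul_of_nonneg_right
        (mul_le_mul_of_nonneg_left (hBle γ hγH) hm1.le) hm2.le
      nlinarith [this]
  · have hzero : G.mnorm (G.Tp η₁) * G.mnorm (G.Tp η₂) = 0 := by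
      rcases eq_or_lt_of_le (G.mnorm_Tp_nonneg η₁) with h | h
      · rw [← h, zero_mul]
      · rcases eq_or_lt_of_le (G.mnorm_Tp_nonneg η₂) with h' | h'
        · rw [← h', mul_zero]
        · exact absurd ⟨h, h'⟩ hm
    obtain ⟨γ, hγH, ⟨hγpath, ⟨es, hhγ, hes⟩, ⟨ee, hlγ, hee⟩⟩, hTγ⟩ :=
      hH (G.tgt e₁) (G.src e₂) ⟨0, G.dim_pos _⟩ ⟨0, G.dim_pos _⟩
    refine ⟨γ, hγH, G.glue_path h1 h2 hγpath hl1 hh2 hhγ hlγ hes.symm hee, ?_, ?_⟩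
    · have h0 : c / (n2 * n2 + 1) * G.mnorm (G.Tp η₁) * G.mnorm (G.Tp η₂) = 0 := by
        rw [mul_assoc, hzero, mul_zero]
      rw [h0]
      exact G.mnorm_Tp_nonneg _
    · have hub := upper γ
      have e1 : (G.mnorm (G.Tp η₁) * G.mnorm (G.Tp γ)) * G.mnorm (G.Tp η₂) = 0 := by
        rw [mul_comm (G.mnorm (G.Tp η₁)) (G.mnorm (G.Tp γ)), mul_assoc, hzero, mul_zero]
      have e2 : B * G.mnorm (G.Tp η₁) * G.mnorm (G.Tp η₂) = 0 := by
        rw [mul_assoc, hzero, mul_zero]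
      linarith
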